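/- Let A ∈ ℂ^{n1×n2×n3} and G ∈ ℂ^{n2×n1×n3}. If A is invertible along G, then the inverse of A along G is unique; that is, if X1 and X2 are both inverses of A along G, then X1 = X2. -/
import Mathlib


noncomputable section

/-- A third-order tensor: a family of frontal slices. -/
abbrev Tensor (n1 n2 n3 : ℕ) : Type := Fin n3 → Matrix (Fin n1) (Fin n2) ℂ

namespace Tensor

/-- The block Toeplitz-plus-Hankel matrix `mat(A)` associated to a tensor. -/
def matT {n1 n2 n3 : ℕ} (A : Tensor n1 n2 n3) :
    Matrix (Fin n3 × Fin n1) (Fin n3 × Fin n2) ℂ := fun p q =>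
  A ⟨p.1.1 - q.1.1 + (q.1.1 - p.1.1), by
        have h1 := p.1.isLt; have h2 := q.1.isLt; omega⟩ p.2 q.2 +
    (if h : p.1.1 + q.1.1 + 2 ≤ n3 then A ⟨p.1.1 + q.1.1 + 1, by omega⟩ p.2 q.2
     else if h2 : n3 ≤ p.1.1 + q.1.1 then
       A ⟨2 * n3 - (p.1.1 + q.1.1) - 1, by have h1 := p.1.isLt; omega⟩ p.2 q.2
     else 0)

/-- `ten`, the inverse of `mat` on its range: the slices of a tensor are recovered
from the first block-column of its `mat` by an alternating sum. -/
def tenT {n1 n2 n3 : ℕ} (M : Matrix (Fin n3 × Fin n1) (Fin n3 × Fin n2) ℂ) :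
    Tensor n1 n2 n3 := fun i => Matrix.of fun a b =>
  ∑ t : Fin n3, if i.1 ≤ t.1 then (-1 : ℂ) ^ (t.1 - i.1) * M (t, a) (⟨0, i.pos⟩, b) else 0

/-- The C-product of two tensors: the unique tensor whose `mat` is `mat(A) * mat(B)`. -/
def cmul {n1 n2 l n3 : ℕ} (A : Tensor n1 n2 n3) (B : Tensor n2 l n3) : Tensor n1 l n3 :=
  tenT (matT A * matT B)

/-- The conjugate transpose of a tensor, taken slice-wise. -/
def conjT {n1 n2 n3 : ℕ} (A : Tensor n1 n2 n3) : Tensor n2 n1 n3 := fun i => (A i).conjTranspose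

/-- The identity tensor: the tensor whose `mat` is the identity matrix. -/
def idT {n n3 : ℕ} : Tensor n n n3 := fun i => if i.1 = 0 then 1 else 0

/-- A tensor is unitary if `Qᴴ *c Q = Q *c Qᴴ = I`. -/
def Unitary {n n3 : ℕ} (Q : Tensor n n n3) : Prop :=
  cmul (conjT Q) Q = idT ∧ cmul Q (conjT Q) = idT

/-- `X` is the inverse of the square tensor `B` under the C-product. -/
def IsInverse {n n3 : ℕ} (B X : Tensor n n n3) : Prop :=
  cmul B X = idT ∧ cmul X B = idT

/-- `X` is the Moore-Penrose inverse of `A` under the C-product. -/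
def IsMP {n1 n2 n3 : ℕ} (A : Tensor n1 n2 n3) (X : Tensor n2 n1 n3) : Prop :=
  cmul (cmul A X) A = A ∧ cmul (cmul X A) X = X ∧
    conjT (cmul A X) = cmul A X ∧ conjT (cmul X A) = cmul X A

/-- Powers of a square tensor with respect to the C-product. -/
def cpow {n n3 : ℕ} (A : Tensor n n n3) : ℕ → Tensor n n n3
  | 0 => idT
  | m + 1 => cmul (cpow A m) A

/-- `ind(A) = k`: `k` is the smallest nonnegative integer with
`rank(mat(A)^k) = rank(mat(A)^(k+1))`. -/
def IsIndex {n n3 : ℕ} (A : Tensor n n n3) (k : ℕ) : Prop :=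
  (matT A ^ k).rank = (matT A ^ (k + 1)).rank ∧
    ∀ j < k, (matT A ^ j).rank ≠ (matT A ^ (j + 1)).rank

/-- `X` is the Drazin inverse of `A` (of index `k`) under the C-product. -/
def IsDrazin {n n3 : ℕ} (A : Tensor n n n3) (k : ℕ) (X : Tensor n n n3) : Prop :=
  cmul (cpow A (k + 1)) X = cpow A k ∧ cmul (cmul X A) X = X ∧ cmul A X = cmul X A

/-- `X` is an inverse of `A` along `G` under the C-product. -/
def IsInvAlong {n1 n2 n3 : ℕ} (A : Tensor n1 n2 n3) (G X : Tensor n2 n1 n3) : Prop :=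
  cmul (cmul X A) G = G ∧ cmul (cmul G A) X = G ∧
    (∃ U : Tensor n1 n1 n3, X = cmul G U) ∧
    (∃ V : Tensor n2 n2 n3, conjT X = cmul (conjT G) V)

/-- All frontal slices are diagonal. -/
def FDiag {n1 n2 n3 : ℕ} (A : Tensor n1 n2 n3) : Prop :=
  ∀ (i : Fin n3) (a : Fin n1) (b : Fin n2), (a : ℕ) ≠ (b : ℕ) → A i a b = 0

/-- All frontal slices are upper triangular. -/
def FUpper {n1 n2 n3 : ℕ} (A : Tensor n1 n2 n3) : Prop :=
  ∀ (i : Fin n3) (a : Fin n1) (b : Fin n2), (b : ℕ) < (a : ℕ) → A i a b = 0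

/-- All frontal slices are lower triangular. -/
def FLower {n1 n2 n3 : ℕ} (A : Tensor n1 n2 n3) : Prop :=
  ∀ (i : Fin n3) (a : Fin n1) (b : Fin n2), (a : ℕ) < (b : ℕ) → A i a b = 0

/-- Slice-wise 2×2 block tensor `[[A, B],[C, D]]`. -/
def blockT {r s t u n3 : ℕ} (A : Tensor r t n3) (B : Tensor r u n3)
    (C : Tensor s t n3) (D : Tensor s u n3) : Tensor (r + s) (t + u) n3 := fun i =>
  Matrix.reindex finSumFinEquiv finSumFinEquiv (Matrix.fromBlocks (A i) (B i) (C i) (D i))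

/-- The mode-3 product of a tensor with an `n3 × n3` matrix. -/
def mode3 {n1 n2 n3 : ℕ} (A : Tensor n1 n2 n3) (M : Matrix (Fin n3) (Fin n3) ℂ) :
    Tensor n1 n2 n3 := fun l => ∑ i, M l i • A i

end Tensor

open Tensor

namespace CProof

open Matrix

/-- Fold an integer into `[0, m]` by reflections (representative of the orbit of `x`
under the group generated by negation and translation by `2m`). -/
def fold (m : ℕ) (x : ℤ) : ℕ :=
  min (x % (2 * (m:ℤ))).toNat (2 * m - (x % (2 * (m:ℤ))).toNat)

lemma fold_neg (m : ℕ) (x : ℤ) : fold m (-x) = fold m x := by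
  rcases Nat.eq_zero_or_pos m with hm | hm
  · subst hm; simp [fold]
  have h2m : (0:ℤ) < 2 * (m:ℤ) := by positivity
  have hx := Int.mul_ediv_add_emod x (2 * (m:ℤ))
  set r : ℤ := x % (2 * (m:ℤ)) with hr
  have hr0 : 0 ≤ r := Int.emod_nonneg x (by omega)
  have hrlt : r < 2 * (m:ℤ) := Int.emod_lt_of_pos x h2m
  have hneg : (-x) % (2 * (m:ℤ)) = if r = 0 then 0 else 2 * (m:ℤ) - r := by
    have : -x = (if r = 0 then 0 else 2 * (m:ℤ) - r) + (2 * (m:ℤ)) * (-(x / (2*(m:ℤ))) - (if r = 0 then 0 else 1)) := by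
      split
      next h => linear_combination hx - h
      next h => linear_combination hx
    rw [this, Int.add_mul_emod_self_left]
    split <;> [simp; exact Int.emod_eq_of_lt (by omega) (by omega)]
  unfold fold
  rw [hneg, ← hr]
  split <;> omega

lemma fold_add (m : ℕ) (x : ℤ) : fold m (x + 2 * (m:ℤ)) = fold m x := by
  unfold fold
  rw [show (x + 2*(m:ℤ)) % (2*(m:ℤ)) = x % (2*(m:ℤ)) by
    simpa using Int.add_mul_emod_self_left (a := x) (b := 2*(m:ℤ)) (c := 1)]

lemma fold_refl (m : ℕ) (x : ℤ) : fold m (2 * (m:ℤ) - x) = fold m x := by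
  rw [show (2*(m:ℤ) - x) = -x + 2*(m:ℤ) by ring, fold_add, fold_neg]

/-- `fold` of a difference of two indices in range. -/
lemma fold_sub (m i j : ℕ) (hi : i < m) (hj : j < m) :
    fold m ((i:ℤ) - (j:ℤ)) = i - j + (j - i) := by
  rcases le_or_gt j i with h | h
  · have h1 : ((i:ℤ) - j) % (2 * (m:ℤ)) = (i:ℤ) - j :=
      Int.emod_eq_of_lt (by omega) (by omega)
    unfold fold; rw [h1]; omega
  · have h1 : ((i:ℤ) - j) % (2 * (m:ℤ)) = (i:ℤ) - j + 2*(m:ℤ) := by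
      conv_lhs => rw [show ((i:ℤ) - j) = ((i:ℤ) - j + 2*(m:ℤ)) + (2*(m:ℤ)) * (-1) by ring]
      rw [Int.add_mul_emod_self_left]
      apply Int.emod_eq_of_lt <;> omega
    unfold fold; rw [h1]; omega

lemma fold_hank (m i j : ℕ) (hi : i < m) (hj : j < m) :
    fold m ((i:ℤ) + (j:ℤ) + 1) = min (i + j + 1) (2 * m - (i + j + 1)) := by
  have h1 : ((i:ℤ) + j + 1) % (2 * (m:ℤ)) = (i:ℤ) + j + 1 :=
    Int.emod_eq_of_lt (by omega) (by omega)
  unfold fold; rw [h1]; omega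

/-- the scalar pattern function of a Toeplitz-plus-Hankel matrix. -/
def ee (m : ℕ) (v : ℕ → ℂ) (i j : ℤ) : ℂ := v (fold m (i - j)) + v (fold m (i + j + 1))

lemma ee_symm (m : ℕ) (v : ℕ → ℂ) (i j : ℤ) : ee m v i j = ee m v j i := by
  unfold ee
  rw [show (i - j) = -(j - i) by ring, fold_neg, show (i + j + 1) = j + i + 1 by ring]

lemma ee_interior (m : ℕ) (v : ℕ → ℂ) (i j : ℤ) :
    ee m v (i-1) j + ee m v (i+1) j = ee m v i (j-1) + ee m v i (j+1) := by
  unfold ee; ring_nf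

lemma ee_left (m : ℕ) (v : ℕ → ℂ) (j : ℤ) : ee m v (-1) j = ee m v 0 j := by
  unfold ee
  rw [show (-1 - j : ℤ) = -(0 + j + 1) by ring, fold_neg,
    show (-1 + j + 1 : ℤ) = -(0 - j) by ring, fold_neg]
  ring

lemma ee_right (m : ℕ) (v : ℕ → ℂ) (j : ℤ) : ee m v (m:ℤ) j = ee m v ((m:ℤ)-1) j := by
  unfold ee
  rw [show ((m:ℤ) + j + 1) = 2*(m:ℤ) - ((m:ℤ) - 1 - j) by ring, fold_refl,
    show ((m:ℤ) - 1 + j + 1) = 2*(m:ℤ) - ((m:ℤ) - j) by ring, fold_refl]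
  ring

/-- The function used as pattern for `matT A` at block entry `(a, b)`. -/
def vv {n1 n2 n3 : ℕ} (A : Tensor n1 n2 n3) (a : Fin n1) (b : Fin n2) (k : ℕ) : ℂ :=
  if h : k < n3 then A ⟨k, h⟩ a b else 0

lemma matT_apply {n1 n2 n3 : ℕ} (A : Tensor n1 n2 n3) (i j : Fin n3)
    (a : Fin n1) (b : Fin n2) :
    matT A (i, a) (j, b) = ee n3 (vv A a b) (i:ℤ) (j:ℤ) := by
  unfold ee
  rw [fold_sub n3 i j i.isLt j.isLt, fold_hank n3 i j i.isLt j.isLt]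
  unfold matT vv
  dsimp only
  rw [dif_pos (show (i:ℕ) - j + ((j:ℕ) - i) < n3 by have := i.isLt; have := j.isLt; omega)]
  congr 1
  have hi := i.isLt; have hj := j.isLt
  by_cases h1 : (i:ℕ) + (j:ℕ) + 2 ≤ n3
  · rw [dif_pos h1, show min ((i:ℕ)+(j:ℕ)+1) (2*n3 - ((i:ℕ)+(j:ℕ)+1)) = (i:ℕ)+(j:ℕ)+1 by omega,
      dif_pos (by omega : (i:ℕ)+(j:ℕ)+1 < n3)]
  · by_cases h2 : n3 ≤ (i:ℕ) + (j:ℕ)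
    · rw [dif_neg h1, dif_pos h2,
        show min ((i:ℕ)+(j:ℕ)+1) (2*n3 - ((i:ℕ)+(j:ℕ)+1)) = 2*n3 - ((i:ℕ)+(j:ℕ)) - 1 by omega,
        dif_pos (by omega : 2*n3 - ((i:ℕ)+(j:ℕ)) - 1 < n3)]
    · rw [dif_neg h1, dif_neg h2,
        show min ((i:ℕ)+(j:ℕ)+1) (2*n3 - ((i:ℕ)+(j:ℕ)+1)) = n3 by omega,
        dif_neg (lt_irrefl n3)]

/-- The scalar tridiagonal (with modified corners) matrix commuting with every `matT`. -/
def Jsc (m : ℕ) (i t : Fin m) : ℂ :=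
  (if (t:ℕ) = (i:ℕ) + 1 then 1 else 0) + (if (t:ℕ) + 1 = (i:ℕ) then 1 else 0) +
  (if (t:ℕ) + (i:ℕ) = 0 then 1 else 0) +
  (if (t:ℕ) + (i:ℕ) + 2 = 2 * m then 1 else 0)

lemma Jsc_symm (m : ℕ) (i t : Fin m) : Jsc m i t = Jsc m t i := by
  unfold Jsc
  have hi := i.isLt; have ht := t.isLt
  split_ifs <;> first | omega | norm_num

lemma sum_ind {m : ℕ} (w : Fin m → ℂ) (k : ℕ) :
    (∑ t : Fin m, (if (t:ℕ) = k then 1 else 0) * w t) = if h : k < m then w ⟨k, h⟩ else 0 := by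
  split
  · next h =>
    rw [Finset.sum_eq_single_of_mem ⟨k, h⟩ (Finset.mem_univ _)]
    · simp
    · intro b _ hb
      rw [if_neg (fun hc => hb (Fin.ext hc)), zero_mul]
  · next h =>
    apply Finset.sum_eq_zero
    intro t _
    rw [if_neg (fun hc : (t:ℕ) = k => h (hc ▸ t.isLt)), zero_mul]

lemma Jsum {m : ℕ} (w : Fin m → ℂ) (i : Fin m) :
    (∑ t, Jsc m i t * w t) =
      (((if h : (i:ℕ) + 1 < m then w ⟨(i:ℕ)+1, h⟩ else 0) +
        (if _ : 0 < (i:ℕ) then w ⟨(i:ℕ)-1, Nat.lt_of_le_of_lt (Nat.sub_le _ _) i.isLt⟩ else 0)) +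
       (if (i:ℕ) = 0 then w i else 0)) + (if (i:ℕ) + 1 = m then w i else 0) := by
  unfold Jsc
  simp only [add_mul, Finset.sum_add_distrib]
  congr 1
  congr 1
  congr 1
  · exact sum_ind w ((i:ℕ)+1)
  · by_cases h0 : 0 < (i:ℕ)
    · have e : (∑ t : Fin m, (if (t:ℕ) + 1 = (i:ℕ) then (1:ℂ) else 0) * w t) =
          ∑ t : Fin m, (if (t:ℕ) = (i:ℕ) - 1 then (1:ℂ) else 0) * w t := by
        refine Finset.sum_congr rfl fun t _ => ?_
        congr 1
        rcases eq_or_ne ((t:ℕ)+1) (i:ℕ) with h | h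
        · rw [if_pos h, if_pos (by omega)]
        · rw [if_neg h, if_neg (by omega)]
      rw [e, sum_ind w ((i:ℕ)-1), dif_pos (show (i:ℕ)-1 < m by have := i.isLt; omega),
        dif_pos h0]
    · rw [dif_neg h0]
      apply Finset.sum_eq_zero
      intro t _
      rw [if_neg (by omega), zero_mul]
  · by_cases h0 : (i:ℕ) = 0
    · have e : (∑ t : Fin m, (if (t:ℕ) + (i:ℕ) = 0 then (1:ℂ) else 0) * w t) =
          ∑ t : Fin m, (if (t:ℕ) = (i:ℕ) then (1:ℂ) else 0) * w t := by
        refine Finset.sum_congr rfl fun t _ => ?_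
        congr 1
        rcases eq_or_ne ((t:ℕ)) (i:ℕ) with h | h
        · rw [if_pos (by omega), if_pos h]
        · rw [if_neg (by omega), if_neg h]
      rw [e, sum_ind w (i:ℕ), dif_pos i.isLt, Fin.eta, if_pos h0]
    · rw [if_neg h0]
      apply Finset.sum_eq_zero
      intro t _
      rw [if_neg (by omega), zero_mul]
  · by_cases h0 : (i:ℕ) + 1 = m
    · have e : (∑ t : Fin m, (if (t:ℕ) + (i:ℕ) + 2 = 2*m then (1:ℂ) else 0) * w t) =
          ∑ t : Fin m, (if (t:ℕ) = (i:ℕ) then (1:ℂ) else 0) * w t := by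
        refine Finset.sum_congr rfl fun t _ => ?_
        congr 1
        have := t.isLt; have := i.isLt
        rcases eq_or_ne ((t:ℕ)) (i:ℕ) with h | h
        · rw [if_pos (by omega), if_pos h]
        · rw [if_neg (by omega), if_neg h]
      rw [e, sum_ind w (i:ℕ), dif_pos i.isLt, Fin.eta, if_pos h0]
    · rw [if_neg h0]
      apply Finset.sum_eq_zero
      intro t _
      have := t.isLt; have := i.isLt
      rw [if_neg (by omega), zero_mul]

lemma Jsum' {m : ℕ} (w : Fin m → ℂ) (j : Fin m) :
    (∑ t, w t * Jsc m t j) =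
      (((if h : (j:ℕ) + 1 < m then w ⟨(j:ℕ)+1, h⟩ else 0) +
        (if _ : 0 < (j:ℕ) then w ⟨(j:ℕ)-1, Nat.lt_of_le_of_lt (Nat.sub_le _ _) j.isLt⟩ else 0)) +
       (if (j:ℕ) = 0 then w j else 0)) + (if (j:ℕ) + 1 = m then w j else 0) := by
  rw [← Jsum w j]
  exact Finset.sum_congr rfl fun t _ => by rw [Jsc_symm, mul_comm]

lemma ee_congr (m : ℕ) (v : ℕ → ℂ) {i i' j j' : ℤ} (hi : i = i') (hj : j = j') :
    ee m v i j = ee m v i' j' := by rw [hi, hj]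

lemma Jrow (m : ℕ) (v : ℕ → ℂ) (i j : Fin m) :
    (∑ t : Fin m, Jsc m i t * ee m v (t:ℤ) (j:ℤ)) =
      ee m v ((i:ℤ) - 1) (j:ℤ) + ee m v ((i:ℤ) + 1) (j:ℤ) := by
  rw [Jsum (fun t => ee m v (t:ℤ) (j:ℤ)) i]
  have him := i.isLt
  by_cases h1 : (i:ℕ) + 1 < m <;> by_cases h0 : 0 < (i:ℕ)
  · rw [dif_pos h1, dif_pos h0, if_neg (by omega), if_neg (by omega)]
    rw [ee_congr m v (show ((((i:ℕ)+1 : ℕ)):ℤ) = (i:ℤ) + 1 by push_cast; ring) rfl,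
      ee_congr m v (show ((((i:ℕ)-1 : ℕ)):ℤ) = (i:ℤ) - 1 by omega) rfl]
    ring
  · rw [dif_pos h1, dif_neg h0, if_pos (by omega), if_neg (by omega)]
    rw [show ((i:ℕ):ℤ) - 1 = -1 by omega, ee_left,
      ee_congr m v (show ((((i:ℕ)+1 : ℕ)):ℤ) = (i:ℤ) + 1 by push_cast; ring) rfl,
      show (0:ℤ) = ((i:ℕ):ℤ) by omega]
    ring
  · rw [dif_neg h1, dif_pos h0, if_neg (by omega), if_pos (by omega)]
    rw [show ((i:ℕ):ℤ) + 1 = ((m:ℕ):ℤ) by omega, ee_right,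
      ee_congr m v (show ((((i:ℕ)-1 : ℕ)):ℤ) = (i:ℤ) - 1 by omega) rfl,
      show ((m:ℕ):ℤ) - 1 = ((i:ℕ):ℤ) by omega]
    ring
  · rw [dif_neg h1, dif_neg h0, if_pos (by omega), if_pos (by omega)]
    rw [show ((i:ℕ):ℤ) - 1 = -1 by omega, ee_left,
      show ((i:ℕ):ℤ) + 1 = ((m:ℕ):ℤ) by omega, ee_right,
      show ((m:ℕ):ℤ) - 1 = ((i:ℕ):ℤ) by omega,
      show (0:ℤ) = ((i:ℕ):ℤ) by omega]
    ring

lemma Jcol (m : ℕ) (v : ℕ → ℂ) (i j : Fin m) :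
    (∑ t : Fin m, ee m v (i:ℤ) (t:ℤ) * Jsc m t j) =
      ee m v (i:ℤ) ((j:ℤ) - 1) + ee m v (i:ℤ) ((j:ℤ) + 1) := by
  have e : (∑ t : Fin m, ee m v (i:ℤ) (t:ℤ) * Jsc m t j) =
      ∑ t : Fin m, Jsc m j t * ee m v (t:ℤ) (i:ℤ) :=
    Finset.sum_congr rfl fun t _ => by rw [Jsc_symm, mul_comm, ee_symm]
  rw [e, Jrow, ee_symm, ee_symm m v ((j:ℤ)+1)]

/-- The block version of `Jsc`. -/
def JB (m n : ℕ) : Matrix (Fin m × Fin n) (Fin m × Fin n) ℂ := fun p q =>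
  Jsc m p.1 q.1 * (if p.2 = q.2 then 1 else 0)

lemma JB_mul_apply {m n : ℕ} {β : Type*} [Fintype β] (M : Matrix (Fin m × Fin n) β ℂ)
    (p : Fin m × Fin n) (q : β) :
    (JB m n * M) p q = ∑ t : Fin m, Jsc m p.1 t * M (t, p.2) q := by
  rw [Matrix.mul_apply, Fintype.sum_prod_type]
  refine Finset.sum_congr rfl fun t _ => ?_
  simp [JB, ite_mul, mul_ite, Finset.sum_ite_eq, mul_assoc]

lemma mul_JB_apply {m n : ℕ} {α : Type*} [Fintype α] (M : Matrix α (Fin m × Fin n) ℂ)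
    (p : α) (q : Fin m × Fin n) :
    (M * JB m n) p q = ∑ t : Fin m, M p (t, q.2) * Jsc m t q.1 := by
  rw [Matrix.mul_apply, Fintype.sum_prod_type]
  refine Finset.sum_congr rfl fun t _ => ?_
  simp only [JB]
  rw [Finset.sum_eq_single_of_mem q.2 (Finset.mem_univ _)]
  · rw [if_pos rfl, mul_one]
  · intro c _ hc
    rw [if_neg hc, mul_zero, mul_zero]

lemma comm_matT {n1 n2 n3 : ℕ} (A : Tensor n1 n2 n3) :
    JB n3 n1 * matT A = matT A * JB n3 n2 := by
  ext p q
  obtain ⟨i, a⟩ := p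
  obtain ⟨j, b⟩ := q
  rw [JB_mul_apply, mul_JB_apply]
  calc (∑ t : Fin n3, Jsc n3 i t * matT A (t, a) (j, b))
      = ∑ t : Fin n3, Jsc n3 i t * ee n3 (vv A a b) (t:ℤ) (j:ℤ) :=
        Finset.sum_congr rfl fun t _ => by rw [matT_apply]
    _ = ee n3 (vv A a b) ((i:ℤ)-1) (j:ℤ) + ee n3 (vv A a b) ((i:ℤ)+1) (j:ℤ) := Jrow _ _ _ _
    _ = ee n3 (vv A a b) (i:ℤ) ((j:ℤ)-1) + ee n3 (vv A a b) (i:ℤ) ((j:ℤ)+1) :=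
        ee_interior _ _ _ _
    _ = ∑ t : Fin n3, ee n3 (vv A a b) (i:ℤ) (t:ℤ) * Jsc n3 t j := (Jcol _ _ _ _).symm
    _ = ∑ t : Fin n3, matT A (i, a) (t, b) * Jsc n3 t j :=
        Finset.sum_congr rfl fun t _ => by rw [matT_apply]

def Ssum {n1 n2 n3 : ℕ} (M : Matrix (Fin n3 × Fin n1) (Fin n3 × Fin n2) ℂ)
    (hp : 0 < n3) (a : Fin n1) (b : Fin n2) (i : ℕ) : ℂ :=
  ∑ t : Fin n3, if i ≤ t.1 then (-1:ℂ) ^ (t.1 - i) * M (t, a) (⟨0, hp⟩, b) else 0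

lemma Ssum_zero_of_ge {n1 n2 n3 : ℕ} (M : Matrix (Fin n3 × Fin n1) (Fin n3 × Fin n2) ℂ)
    (hp : 0 < n3) (a b) {i : ℕ} (hi : n3 ≤ i) : Ssum M hp a b i = 0 :=
  Finset.sum_eq_zero fun t _ => if_neg (by have := t.isLt; omega)

lemma Ssum_add {n1 n2 n3 : ℕ} (M : Matrix (Fin n3 × Fin n1) (Fin n3 × Fin n2) ℂ)
    (hp : 0 < n3) (a b) (i : ℕ) (hi : i < n3) :
    Ssum M hp a b i + Ssum M hp a b (i+1) = M (⟨i, hi⟩, a) (⟨0, hp⟩, b) := by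
  unfold Ssum
  rw [← Finset.sum_add_distrib]
  have e : ∀ t : Fin n3,
      ((if i ≤ t.1 then (-1:ℂ) ^ (t.1 - i) * M (t, a) (⟨0,hp⟩, b) else 0) +
       (if i + 1 ≤ t.1 then (-1:ℂ) ^ (t.1 - (i+1)) * M (t, a) (⟨0,hp⟩, b) else 0)) =
      (if (t:ℕ) = i then (1:ℂ) else 0) * M (t, a) (⟨0,hp⟩, b) := by
    intro t
    rcases lt_trichotomy (t.1) i with h | h | h
    · rw [if_neg (by omega), if_neg (by omega), if_neg (by omega), add_zero, zero_mul]
    · rw [if_pos (by omega), if_neg (by omega), if_pos h, show t.1 - i = 0 by omega,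
        pow_zero, add_zero]
    · rw [if_pos (by omega), if_pos (by omega), if_neg (by omega),
        show t.1 - i = (t.1 - (i+1)) + 1 by omega, pow_succ]
      ring
  rw [Finset.sum_congr rfl (fun t _ => e t),
    sum_ind (fun t => M (t, a) (⟨0,hp⟩, b)) i, dif_pos hi]

lemma matT_apply_zero {n1 n2 n3 : ℕ} (A : Tensor n1 n2 n3) (i : Fin n3)
    (a : Fin n1) (b : Fin n2) (hp : 0 < n3) :
    matT A (i, a) (⟨0, hp⟩, b) =
      A i a b + (if h : (i:ℕ) + 2 ≤ n3 then A ⟨(i:ℕ)+1, by omega⟩ a b else 0) := by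
  rw [matT_apply]
  unfold ee
  rw [show (((⟨0,hp⟩ : Fin n3)):ℤ) = ((0:ℕ):ℤ) from rfl,
    fold_sub n3 i.1 0 i.isLt hp, fold_hank n3 i.1 0 i.isLt hp]
  have hi := i.isLt
  unfold vv
  rw [show (i:ℕ) - 0 + (0 - (i:ℕ)) = (i:ℕ) by omega, dif_pos i.isLt, Fin.eta]
  congr 1
  by_cases h : (i:ℕ) + 2 ≤ n3
  · rw [show min ((i:ℕ)+0+1) (2*n3 - ((i:ℕ)+0+1)) = (i:ℕ)+1 by omega,
      dif_pos (by omega : (i:ℕ)+1 < n3), dif_pos h]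
  · rw [show min ((i:ℕ)+0+1) (2*n3 - ((i:ℕ)+0+1)) = n3 by omega,
      dif_neg (lt_irrefl n3), dif_neg h]

lemma matT_tenT_apply_zero {n1 n2 n3 : ℕ} (M : Matrix (Fin n3 × Fin n1) (Fin n3 × Fin n2) ℂ)
    (i : Fin n3) (a : Fin n1) (b : Fin n2) (hp : 0 < n3) :
    matT (tenT M) (i, a) (⟨0, hp⟩, b) = M (i, a) (⟨0, hp⟩, b) := by
  rw [matT_apply_zero]
  by_cases h : (i:ℕ) + 2 ≤ n3
  · rw [dif_pos h]
    show Ssum M hp a b i.1 + Ssum M hp a b ((i:ℕ)+1) = _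
    rw [Ssum_add M hp a b i.1 i.isLt, Fin.eta]
  · rw [dif_neg h]
    have hz : (0:ℂ) = Ssum M hp a b ((i:ℕ)+1) :=
      (Ssum_zero_of_ge M hp a b (by have := i.isLt; omega)).symm
    rw [hz]
    show Ssum M hp a b i.1 + Ssum M hp a b ((i:ℕ)+1) = _
    rw [Ssum_add M hp a b i.1 i.isLt, Fin.eta]

lemma eq_of_comm {n1 n2 n3 : ℕ} {M N : Matrix (Fin n3 × Fin n1) (Fin n3 × Fin n2) ℂ}
    (hM : JB n3 n1 * M = M * JB n3 n2) (hN : JB n3 n1 * N = N * JB n3 n2)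
    (hcol : ∀ (i : Fin n3) (a : Fin n1) (b : Fin n2) (hp : 0 < n3),
      M (i, a) (⟨0, hp⟩, b) = N (i, a) (⟨0, hp⟩, b)) : M = N := by
  have hDc : JB n3 n1 * (M - N) = (M - N) * JB n3 n2 := by
    rw [Matrix.mul_sub, Matrix.sub_mul, hM, hN]
  have key : ∀ j : ℕ, ∀ hj : j < n3, ∀ (i : Fin n3) (a : Fin n1) (b : Fin n2),
      (M - N) (i, a) (⟨j, hj⟩, b) = 0 := by
    intro j
    induction j using Nat.strong_induction_on with
    | _ j ih =>
      intro hj i a b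
      match j, hj with
      | 0, hj =>
        rw [Matrix.sub_apply, hcol i a b hj, sub_self]
      | (j'+1), hj =>
        have hj' : j' < n3 := by omega
        have hcomm := congrFun (congrFun hDc (i, a)) (⟨j', hj'⟩, b)
        rw [JB_mul_apply, mul_JB_apply] at hcomm
        have hL : (∑ t : Fin n3, Jsc n3 i t * (M - N) ((t, a)) ((⟨j', hj'⟩, b))) = 0 :=
          Finset.sum_eq_zero fun t _ => by rw [ih j' (by omega) hj' t a b, mul_zero]
        rw [hL, Jsum' (fun t => (M - N) (i, a) (t, b)) ⟨j', hj'⟩] at hcomm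
        simp only [Fin.eta] at hcomm
        rw [dif_pos (show ((⟨j',hj'⟩ : Fin n3) : ℕ) + 1 < n3 from hj)] at hcomm
        have z2 : (if _ : 0 < ((⟨j',hj'⟩ : Fin n3) : ℕ) then
            (M - N) (i, a) (⟨((⟨j',hj'⟩ : Fin n3) : ℕ) - 1,
              Nat.lt_of_le_of_lt (Nat.sub_le _ _) (Fin.isLt _)⟩, b) else 0) = 0 := by
          split
          · exact ih (j'-1) (by omega) (by omega) i a b
          · rfl
        have z3 : (if ((⟨j',hj'⟩ : Fin n3) : ℕ) = 0 then
            (M - N) (i, a) (⟨j', hj'⟩, b) else 0) = 0 := by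
          split
          · exact ih j' (by omega) hj' i a b
          · rfl
        have z4 : (if ((⟨j',hj'⟩ : Fin n3) : ℕ) + 1 = n3 then
            (M - N) (i, a) (⟨j', hj'⟩, b) else 0) = 0 := by
          split
          · exact ih j' (by omega) hj' i a b
          · rfl
        rw [z2, z3, z4, add_zero, add_zero, add_zero] at hcomm
        exact hcomm.symm
  ext p q
  obtain ⟨i, a⟩ := p
  obtain ⟨j, b⟩ := q
  have := key j.1 j.isLt i a b
  rw [Fin.eta, Matrix.sub_apply] at this
  exact sub_eq_zero.mp this

lemma matT_cmul {n1 n2 l n3 : ℕ} (A : Tensor n1 n2 n3) (B : Tensor n2 l n3) :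
    matT (cmul A B) = matT A * matT B := by
  have hN : JB n3 n1 * (matT A * matT B) = (matT A * matT B) * JB n3 l := by
    calc JB n3 n1 * (matT A * matT B) = (JB n3 n1 * matT A) * matT B :=
          (Matrix.mul_assoc _ _ _).symm
      _ = (matT A * JB n3 n2) * matT B := by rw [comm_matT]
      _ = matT A * (JB n3 n2 * matT B) := Matrix.mul_assoc _ _ _
      _ = matT A * (matT B * JB n3 l) := by rw [comm_matT]
      _ = (matT A * matT B) * JB n3 l := (Matrix.mul_assoc _ _ _).symm
  exact eq_of_comm (comm_matT _) hN
    (fun i a b hp => matT_tenT_apply_zero (matT A * matT B) i a b hp)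

lemma matT_conjT {n1 n2 n3 : ℕ} (A : Tensor n1 n2 n3) :
    matT (conjT A) = (matT A)ᴴ := by
  ext p q
  obtain ⟨i, a⟩ := p
  obtain ⟨j, b⟩ := q
  rw [Matrix.conjTranspose_apply, matT_apply, matT_apply]
  unfold ee
  rw [show ((j:ℤ) - (i:ℤ)) = -((i:ℤ) - (j:ℤ)) by ring, fold_neg,
    show ((j:ℤ) + (i:ℤ) + 1) = (i:ℤ) + (j:ℤ) + 1 by ring, star_add]
  have hv : ∀ k, vv (conjT A) a b k = star (vv A b a k) := by
    intro k
    unfold vv conjT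
    split
    · rfl
    · rw [star_zero]
  rw [hv, hv]

lemma matT_inj {n1 n2 n3 : ℕ} {A B : Tensor n1 n2 n3} (h : matT A = matT B) : A = B := by
  funext i
  ext a b
  have key : ∀ d : ℕ, ∀ i : Fin n3, n3 - (i:ℕ) ≤ d + 1 →
      ∀ (a : Fin n1) (b : Fin n2), A i a b = B i a b := by
    intro d
    induction d with
    | zero =>
      intro i hi a b
      have hp : 0 < n3 := i.pos
      have h1 := congrFun (congrFun h (i, a)) (⟨0, hp⟩, b)
      rw [matT_apply_zero, matT_apply_zero,
        dif_neg (show ¬ ((i:ℕ) + 2 ≤ n3) from by have := i.isLt; omega),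
        dif_neg (show ¬ ((i:ℕ) + 2 ≤ n3) from by have := i.isLt; omega),
        add_zero, add_zero] at h1
      exact h1
    | succ d ih =>
      intro i hi a b
      by_cases hcase : n3 - (i:ℕ) ≤ d + 1
      · exact ih i hcase a b
      · have hp : 0 < n3 := i.pos
        have h2 : (i:ℕ) + 2 ≤ n3 := by have := i.isLt; omega
        have h1 := congrFun (congrFun h (i, a)) (⟨0, hp⟩, b)
        rw [matT_apply_zero, matT_apply_zero, dif_pos h2, dif_pos h2,
          ih ⟨(i:ℕ)+1, by omega⟩ (by simp only [Fin.val_mk]; omega) a b] at h1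
        exact add_right_cancel h1
  exact key n3 i (by omega) a b

end CProof

open CProof Matrix in
theorem stmt17 {n1 n2 n3 : ℕ} (A : Tensor n1 n2 n3)
    (G X1 X2 : Tensor n2 n1 n3)
    (h1 : IsInvAlong A G X1) (h2 : IsInvAlong A G X2) :
    X1 = X2 := by
  unfold IsInvAlong at h1 h2
  obtain ⟨hA1, hA2, ⟨U1, hU1⟩, ⟨V1, hV1⟩⟩ := h1
  obtain ⟨hB1, hB2, ⟨U2, hU2⟩, ⟨V2, hV2⟩⟩ := h2
  apply matT_inj
  have e1 : matT X1 * matT A * matT G = matT G := by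
    have := congrArg matT hA1
    rwa [matT_cmul, matT_cmul] at this
  have e2 : matT G * matT A * matT X2 = matT G := by
    have := congrArg matT hB2
    rwa [matT_cmul, matT_cmul] at this
  have e3 : matT X1 = (matT V1)ᴴ * matT G := by
    have := congrArg matT hV1
    rw [matT_cmul, matT_conjT, matT_conjT] at this
    calc matT X1 = ((matT X1)ᴴ)ᴴ := (Matrix.conjTranspose_conjTranspose _).symm
      _ = ((matT G)ᴴ * matT V1)ᴴ := by rw [this]
      _ = (matT V1)ᴴ * ((matT G)ᴴ)ᴴ := Matrix.conjTranspose_mul _ _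
      _ = (matT V1)ᴴ * matT G := by rw [Matrix.conjTranspose_conjTranspose]
  have e4 : matT X2 = matT G * matT U2 := by
    have := congrArg matT hU2
    rwa [matT_cmul] at this
  calc matT X1 = (matT V1)ᴴ * matT G := e3
    _ = (matT V1)ᴴ * (matT G * matT A * matT X2) := by rw [e2]
    _ = ((matT V1)ᴴ * matT G) * matT A * matT X2 := by
        rw [Matrix.mul_assoc, Matrix.mul_assoc, Matrix.mul_assoc]
    _ = matT X1 * matT A * matT X2 := by rw [← e3]
    _ = matT X1 * matT A * (matT G * matT U2) := by rw [← e4]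
    _ = (matT X1 * matT A * matT G) * matT U2 := (Matrix.mul_assoc _ _ _).symm
    _ = matT G * matT U2 := by rw [e1]
    _ = matT X2 := e4.symm
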